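/- With the increment-gadget construction (G_i of length i+u for i ∈ [2,u], S the concatenation of c_j copies of G_{e_j} for j = 1..m in increasing order of e_j): the number d of indices i ∈ [2,|S|] with lmco(i) ≠ lmco(i−1) satisfies m ≤ d ≤ 8m, and |S| ≤ 2u·(c₁+...+c_m). -/

import Mathlib

open Finset

/-- `[i,j]` is a co-occurrence of `Q` in the length-`n` string `S` (1-indexed):
`1 ≤ i ≤ j ≤ n` and every character of `Q` occurs in `S[i..j]`. -/
def Cooc {α : Type*} (n : ℕ) (S : ℕ → α) (Q : Finset α) (i j : ℕ) : Prop :=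
  1 ≤ i ∧ i ≤ j ∧ j ≤ n ∧ ∀ c ∈ Q, ∃ k, i ≤ k ∧ k ≤ j ∧ S k = c

/-- `[i,j]` is a left-minimal co-occurrence: a co-occurrence such that `[i+1,j]` is not. -/
def LeftMinCooc {α : Type*} (n : ℕ) (S : ℕ → α) (Q : Finset α) (i j : ℕ) : Prop :=
  Cooc n S Q i j ∧ ¬ Cooc n S Q (i+1) j

/-- `[i,j]` is a minimal co-occurrence: a co-occurrence such that neither
`[i+1,j]` nor `[i,j-1]` is a co-occurrence. -/
def MinCooc {α : Type*} (n : ℕ) (S : ℕ → α) (Q : Finset α) (i j : ℕ) : Prop :=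
  Cooc n S Q i j ∧ ¬ Cooc n S Q (i+1) j ∧ ¬ Cooc n S Q i (j-1)

/-- `lmco n S Q w`: number of left-minimal co-occurrences of `Q` in `S` of length `w`. -/
noncomputable def lmco {α : Type*} (n : ℕ) (S : ℕ → α) (Q : Finset α) (w : ℕ) : ℕ :=
  {p : ℕ × ℕ | LeftMinCooc n S Q p.1 p.2 ∧ p.2 - p.1 + 1 = w}.ncard

/-- `dlt n S Q i = lmco(i) - lmco(i-1)` as an integer. -/
noncomputable def dlt {α : Type*} (n : ℕ) (S : ℕ → α) (Q : Finset α) (i : ℕ) : ℤ :=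
  (lmco n S Q i : ℤ) - (lmco n S Q (i-1) : ℤ)

/-- `coN n S Q w`: number of length-`w` co-occurrences of `Q` in `S`, i.e. the number of
windows `[k-w+1,k]` with `w ≤ k ≤ n` that are co-occurrences. -/
noncomputable def coN {α : Type*} (n : ℕ) (S : ℕ → α) (Q : Finset α) (w : ℕ) : ℕ :=
  {k : ℕ | w ≤ k ∧ k ≤ n ∧ Cooc n S Q (k - w + 1) k}.ncard

/-- The increment gadget `G_i = A · $^{i-2} · B · $^{u}` (with `$` written `D`). -/
def Gadget {α : Type*} (A B D : α) (u i : ℕ) : List α :=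
  A :: (List.replicate (i - 2) D ++ B :: List.replicate u D)

/-- Concatenation of `c 1` copies of `G_{e 1}`, then `c 2` copies of `G_{e 2}`, …,
then `c m` copies of `G_{e m}`. -/
def GadgetString {α : Type*} (A B D : α) (u m : ℕ) (e c : ℕ → ℕ) : List α :=
  ((List.range m).map (fun j => (List.replicate (c (j+1)) (Gadget A B D u (e (j+1)))).flatten)).flatten

namespace S17
variable {α : Type*} [DecidableEq α]

def offf (u : ℕ) (V : List ℕ) (k : ℕ) : ℕ := ((V.take k).map (fun x => x + u)).sum

@[simp] lemma offf_zero (u : ℕ) (V : List ℕ) : offf u V 0 = 0 := by simp [offf]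

lemma offf_nil (u k : ℕ) : offf u [] k = 0 := by simp [offf]

lemma offf_cons_succ (u x : ℕ) (V : List ℕ) (k : ℕ) :
    offf u (x :: V) (k+1) = (x + u) + offf u V k := by simp [offf]

lemma offf_succ (u : ℕ) (V : List ℕ) {k : ℕ} (hk : k < V.length) :
    offf u V (k+1) = offf u V k + (V.getD k 0 + u) := by
  unfold offf
  rw [List.take_succ, List.getElem?_eq_getElem hk, List.getD_eq_getElem _ _ hk,
    List.map_append, List.sum_append]
  simp only [Option.toList_some, List.map_cons, List.map_nil, List.sum_cons, List.sum_nil]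
  omega

lemma offf_mono (u : ℕ) (V : List ℕ) : Monotone (offf u V) := by
  apply monotone_nat_of_le_succ
  intro k
  rcases lt_or_ge k V.length with h | h
  · rw [offf_succ u V h]; omega
  · unfold offf
    rw [List.take_of_length_le h, List.take_of_length_le (by omega)]

lemma gadget_length (A B D : α) {u x : ℕ} (hx : 2 ≤ x) :
    (Gadget A B D u x).length = x + u := by simp [Gadget]; omega

lemma length_flatten (A B D : α) (u : ℕ) (V : List ℕ) (hV : ∀ x ∈ V, 2 ≤ x) :
    ((V.map (Gadget A B D u)).flatten).length = offf u V V.length := by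
  induction V with
  | nil => simp [offf]
  | cons x V ih =>
      simp only [List.map_cons, List.flatten_cons, List.length_append, List.length_cons,
        offf_cons_succ]
      rw [gadget_length A B D (hV x (by simp)), ih (fun y hy => hV y (by simp [hy]))]

lemma cons_rep_get (B D : α) (u t : ℕ) (ht : t < (B :: List.replicate u D).length) :
    (B :: List.replicate u D)[t] = if t = 0 then B else D := by
  match t with
  | 0 => simp
  | (t'+1) => simp [List.getElem_cons_succ, List.getElem_replicate]

lemma gadget_char (A B D : α) {u x : ℕ} (hx : 2 ≤ x) {q : ℕ} (hq : q < x + u) :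
    (Gadget A B D u x).getD q D = if q = 0 then A else if q + 1 = x then B else D := by
  have hlen : q < (Gadget A B D u x).length := by rw [gadget_length A B D hx]; exact hq
  rw [List.getD_eq_getElem _ _ hlen]
  simp only [Gadget]
  match q with
  | 0 => simp
  | (q'+1) =>
    simp only [List.getElem_cons_succ]
    rcases lt_or_ge q' (x-2) with h | h
    · rw [List.getElem_append_left (by simpa using h)]
      simp only [List.getElem_replicate]
      have : ¬ (q' + 1 + 1 = x) := by omega
      simp [this]
    · rw [List.getElem_append_right (by simpa using h), cons_rep_get]
      simp only [List.length_replicate]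
      rcases eq_or_lt_of_le h with h2 | h2
      · have hb : q' + 1 + 1 = x := by omega
        simp [hb, show q' - (x-2) = 0 from by omega]
      · have hb : ¬ (q' + 1 + 1 = x) := by omega
        simp [hb, show ¬ (q' - (x-2) = 0) from by omega]

lemma char_flatten (A B D : α) (hAB : A ≠ B) (hAD : A ≠ D) (hBD : B ≠ D) (u : ℕ) :
    ∀ (V : List ℕ), (∀ x ∈ V, 2 ≤ x) → ∀ q, q < offf u V V.length →
      (((V.map (Gadget A B D u)).flatten).getD q D = A ↔ ∃ k, k < V.length ∧ q = offf u V k) ∧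
      (((V.map (Gadget A B D u)).flatten).getD q D = B ↔
        ∃ k, k < V.length ∧ q + 1 = offf u V k + V.getD k 0) := by
  intro V
  induction V with
  | nil => intro _ q hq; simp [offf] at hq
  | cons x V ih =>
      intro hV q hq
      have hx : 2 ≤ x := hV x (by simp)
      have hV' : ∀ y ∈ V, 2 ≤ y := fun y hy => hV y (by simp [hy])
      have hlen1 : (Gadget A B D u x).length = x + u := gadget_length A B D hx
      have hlen2 : ((V.map (Gadget A B D u)).flatten).length = offf u V V.length :=
        length_flatten A B D u V hV'
      have hq' : q < (x + u) + offf u V V.length := by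
        have := offf_cons_succ u x V V.length
        simpa [this] using hq
      have hsplit : ((( x :: V).map (Gadget A B D u)).flatten)
          = Gadget A B D u x ++ (V.map (Gadget A B D u)).flatten := by
        simp
      rcases lt_or_ge q (x + u) with h | h
      · -- inside first gadget
        have hget : (((x :: V).map (Gadget A B D u)).flatten).getD q D
            = (Gadget A B D u x).getD q D := by
          rw [hsplit, List.getD_append _ _ _ _ (by omega)]
        rw [hget, gadget_char A B D hx h]
        constructor
        · constructor
          · intro hA
            by_cases h0 : q = 0
            · exact ⟨0, by simp, by simp [h0, offf_zero]⟩
            · by_cases h1 : q + 1 = x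
              · simp [h0, h1] at hA; exact absurd hA hAB.symm
              · simp [h0, h1] at hA; exact absurd hA hAD.symm
          · rintro ⟨k, hk, hqk⟩
            match k with
            | 0 => simp [offf_zero] at hqk; simp [hqk]
            | (k'+1) =>
              rw [offf_cons_succ] at hqk; omega
        · constructor
          · intro hB
            by_cases h0 : q = 0
            · simp [h0] at hB; exact absurd hB hAB
            · by_cases h1 : q + 1 = x
              · exact ⟨0, by simp, by simp [offf_zero, h1]⟩
              · simp [h0, h1] at hB; exact absurd hB hBD.symm
          · rintro ⟨k, hk, hqk⟩
            match k with
            | 0 =>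
              simp only [offf_zero, List.getD_cons_zero, Nat.zero_add] at hqk
              have h0 : ¬ (q = 0) := by omega
              simp [h0, hqk]
            | (k'+1) =>
              rw [offf_cons_succ] at hqk
              simp only [List.getD_cons_succ] at hqk
              have h2 : 2 ≤ V.getD k' 0 := by
                have hk' : k' < V.length := by simpa using hk
                rw [List.getD_eq_getElem _ _ hk']
                exact hV' _ (List.getElem_mem hk')
              omega
      · -- inside the rest
        have hget : (((x :: V).map (Gadget A B D u)).flatten).getD q D
            = ((V.map (Gadget A B D u)).flatten).getD (q - (x+u)) D := by
          rw [hsplit, List.getD_append_right _ _ _ _ (by omega)]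
          congr 1
          omega
        have hrec := ih hV' (q - (x+u)) (by omega)
        rw [hget]
        constructor
        · rw [hrec.1]
          constructor
          · rintro ⟨k, hk, hqk⟩
            exact ⟨k+1, by simpa using hk, by rw [offf_cons_succ]; omega⟩
          · rintro ⟨k, hk, hqk⟩
            match k with
            | 0 => rw [offf_zero] at hqk; omega
            | (k'+1) =>
              rw [offf_cons_succ] at hqk
              exact ⟨k', by simpa using hk, by omega⟩
        · rw [hrec.2]
          constructor
          · rintro ⟨k, hk, hqk⟩
            refine ⟨k+1, by simpa using hk, ?_⟩
            rw [offf_cons_succ]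
            simp only [List.getD_cons_succ]
            omega
          · rintro ⟨k, hk, hqk⟩
            match k with
            | 0 =>
              rw [offf_zero] at hqk
              simp only [List.getD_cons_zero] at hqk
              have : x ≤ x := le_refl x
              omega
            | (k'+1) =>
              rw [offf_cons_succ] at hqk
              simp only [List.getD_cons_succ] at hqk
              exact ⟨k', by simpa using hk, by omega⟩

lemma vv_ge (V : List ℕ) (hV2 : ∀ x ∈ V, 2 ≤ x) {k : ℕ} (hk : k < V.length) :
    2 ≤ V.getD k 0 := by
  rw [List.getD_eq_getElem _ _ hk]
  exact hV2 _ (List.getElem_mem hk)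

lemma offf_lt (u : ℕ) (V : List ℕ) (hV2 : ∀ x ∈ V, 2 ≤ x) {k l : ℕ} (hkl : k < l)
    (hl : l ≤ V.length) : offf u V k < offf u V l := by
  have h1 : k < V.length := by omega
  have h2 := offf_succ u V h1
  have h3 := offf_mono u V (show k + 1 ≤ l from hkl)
  have h4 : 2 ≤ V.getD k 0 := vv_ge V hV2 h1
  omega

lemma cooc_iff (A B D : α) (hAB : A ≠ B) (hAD : A ≠ D) (hBD : B ≠ D) (u : ℕ)
    (V : List ℕ) (hV2 : ∀ x ∈ V, 2 ≤ x) (i j : ℕ) :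
    Cooc (offf u V V.length) (fun p => ((V.map (Gadget A B D u)).flatten).getD (p-1) D)
      ({A, B} : Finset α) i j ↔
    1 ≤ i ∧ i ≤ j ∧ j ≤ offf u V V.length ∧
      (∃ k, k < V.length ∧ i ≤ offf u V k + 1 ∧ offf u V k + 1 ≤ j) ∧
      (∃ k, k < V.length ∧ i ≤ offf u V k + V.getD k 0 ∧ offf u V k + V.getD k 0 ≤ j) := by
  constructor
  · rintro ⟨h1, h2, h3, h4⟩
    refine ⟨h1, h2, h3, ?_, ?_⟩
    · obtain ⟨p, hip, hpj, hSp⟩ := h4 A (by simp)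
      have hq : p - 1 < offf u V V.length := by omega
      obtain ⟨k, hk, hpk⟩ := ((char_flatten A B D hAB hAD hBD u V hV2 (p-1) hq).1).mp hSp
      exact ⟨k, hk, by omega, by omega⟩
    · obtain ⟨p, hip, hpj, hSp⟩ := h4 B (by simp)
      have hq : p - 1 < offf u V V.length := by omega
      obtain ⟨k, hk, hpk⟩ := ((char_flatten A B D hAB hAD hBD u V hV2 (p-1) hq).2).mp hSp
      exact ⟨k, hk, by omega, by omega⟩
  · rintro ⟨h1, h2, h3, ⟨k, hk, hk1, hk2⟩, ⟨l, hl, hl1, hl2⟩⟩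
    refine ⟨h1, h2, h3, ?_⟩
    have hA : ∃ p, i ≤ p ∧ p ≤ j ∧ ((V.map (Gadget A B D u)).flatten).getD (p-1) D = A := by
      refine ⟨offf u V k + 1, hk1, hk2, ?_⟩
      have hq : offf u V k + 1 - 1 < offf u V V.length := by
        have := offf_lt u V hV2 (show k < V.length from hk) (le_refl _)
        omega
      apply ((char_flatten A B D hAB hAD hBD u V hV2 _ hq).1).mpr
      exact ⟨k, hk, by omega⟩
    have hB : ∃ p, i ≤ p ∧ p ≤ j ∧ ((V.map (Gadget A B D u)).flatten).getD (p-1) D = B := by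
      refine ⟨offf u V l + V.getD l 0, hl1, hl2, ?_⟩
      have hv2 : 2 ≤ V.getD l 0 := vv_ge V hV2 hl
      have hle : offf u V l + V.getD l 0 + u = offf u V (l+1) := by
        have := offf_succ u V hl; omega
      have hln : offf u V (l+1) ≤ offf u V V.length := offf_mono u V (by omega)
      have hq : offf u V l + V.getD l 0 - 1 < offf u V V.length := by omega
      apply ((char_flatten A B D hAB hAD hBD u V hV2 _ hq).2).mpr
      exact ⟨l, hl, by omega⟩
    intro cc hcc
    simp only [Finset.mem_insert, Finset.mem_singleton] at hcc
    rcases hcc with h | h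
    · rw [h]; exact hA
    · rw [h]; exact hB

lemma lmc_iff (A B D : α) (hAB : A ≠ B) (hAD : A ≠ D) (hBD : B ≠ D) (u : ℕ)
    (V : List ℕ) (hV2 : ∀ x ∈ V, 2 ≤ x) (i j : ℕ) :
    LeftMinCooc (offf u V V.length) (fun p => ((V.map (Gadget A B D u)).flatten).getD (p-1) D)
      ({A, B} : Finset α) i j ↔
    ∃ k, k < V.length ∧
      ((i = offf u V k + 1 ∧ offf u V k + V.getD k 0 ≤ j ∧ j ≤ offf u V (k+1)) ∨
       (k+1 < V.length ∧ i = offf u V k + V.getD k 0 ∧ offf u V (k+1) + 1 ≤ j ∧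
         j + 1 ≤ offf u V (k+1) + V.getD (k+1) 0)) := by
  have hmono := offf_mono u V
  have hne : ∀ k l : ℕ, k < V.length → l < V.length →
      offf u V k + 1 ≠ offf u V l + V.getD l 0 := by
    intro k l hk hl h
    have hv2 : 2 ≤ V.getD l 0 := vv_ge V hV2 hl
    rcases le_or_gt k l with hh | hh
    · have := hmono hh; omega
    · have h1 := offf_succ u V hl
      have h2 := hmono (show l + 1 ≤ k from hh)
      omega
  constructor
  · rintro ⟨hc, hnc⟩
    rw [cooc_iff A B D hAB hAD hBD u V hV2] at hc hnc
    obtain ⟨h1, h2, h3, ⟨ka, hka, hka1, hka2⟩, ⟨kb, hkb, hkb1, hkb2⟩⟩ := hc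
    have hij : i < j := by
      rcases eq_or_lt_of_le h2 with rfl | h
      · exact absurd (by omega : offf u V ka + 1 = offf u V kb + V.getD kb 0)
          (hne ka kb hka hkb)
      · exact h
    have hAB' : ¬ ((∃ k, k < V.length ∧ i + 1 ≤ offf u V k + 1 ∧ offf u V k + 1 ≤ j) ∧
        (∃ k, k < V.length ∧ i + 1 ≤ offf u V k + V.getD k 0 ∧
          offf u V k + V.getD k 0 ≤ j)) :=
      fun ⟨hA, hB⟩ => hnc ⟨by omega, by omega, h3, hA, hB⟩
    rw [not_and_or] at hAB'
    rcases hAB' with hnA | hnB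
    · push_neg at hnA
      have hia : i = offf u V ka + 1 := by
        by_contra hcon
        have := hnA ka hka (by omega)
        omega
      refine ⟨ka, hka, Or.inl ⟨hia, ?_, ?_⟩⟩
      · -- offf ka + vv ka ≤ j
        have hge : ka ≤ kb := by
          by_contra hcon
          push_neg at hcon
          have h5 := offf_succ u V hkb
          have h6 := hmono (show kb + 1 ≤ ka from hcon)
          omega
        rcases eq_or_lt_of_le hge with rfl | hlt
        · exact hkb2
        · have h5 := offf_succ u V hka
          have h6 := hmono (show ka + 1 ≤ kb from hlt)
          have hv2 : 2 ≤ V.getD kb 0 := vv_ge V hV2 hkb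
          omega
      · -- j ≤ offf (ka+1)
        rcases eq_or_lt_of_le (show ka + 1 ≤ V.length from hka) with heq | hlt
        · rw [heq]; exact h3
        · by_contra hcon
          push_neg at hcon
          have h5 := offf_succ u V hka
          have hv2 : 2 ≤ V.getD ka 0 := vv_ge V hV2 hka
          have := hnA (ka+1) hlt (by omega)
          omega
    · push_neg at hnB
      have hib : i = offf u V kb + V.getD kb 0 := by
        by_contra hcon
        have := hnB kb hkb (by omega)
        omega
      have hkab : kb < ka := by
        by_contra hcon
        push_neg at hcon
        have h5 := hmono hcon
        have hv2 : 2 ≤ V.getD kb 0 := vv_ge V hV2 hkb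
        have := hne ka kb hka hkb
        omega
      have hkb1' : kb + 1 < V.length := by omega
      refine ⟨kb, hkb, Or.inr ⟨hkb1', hib, ?_, ?_⟩⟩
      · have h6 := hmono (show kb + 1 ≤ ka from hkab)
        have hx := hne ka kb hka hkb
        omega
      · by_contra hcon
        push_neg at hcon
        have h5 := offf_succ u V hkb
        have hv2 : 2 ≤ V.getD (kb+1) 0 := vv_ge V hV2 hkb1'
        have := hnB (kb+1) hkb1' (by omega)
        omega
  · rintro ⟨k, hk, hcase⟩
    have h5 := offf_succ u V hk
    have hv2 : 2 ≤ V.getD k 0 := vv_ge V hV2 hk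
    have hlen : offf u V (k+1) ≤ offf u V V.length := hmono (by omega)
    rcases hcase with ⟨hi, hbj, hjo⟩ | ⟨hklen, hi, hj1, hj2⟩
    · constructor
      · rw [cooc_iff A B D hAB hAD hBD u V hV2]
        exact ⟨by omega, by omega, by omega,
          ⟨k, hk, by omega, by omega⟩, ⟨k, hk, by omega, hbj⟩⟩
      · rw [cooc_iff A B D hAB hAD hBD u V hV2]
        rintro ⟨_, _, _, ⟨l, hl, hl1, hl2⟩, _⟩
        rcases le_or_gt l k with hh | hh
        · have := hmono hh; omega
        · have := hmono (show k + 1 ≤ l from hh); omega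
    · have h6 := offf_succ u V hklen
      have hv2' : 2 ≤ V.getD (k+1) 0 := vv_ge V hV2 hklen
      have hlen2 : offf u V (k+1+1) ≤ offf u V V.length := hmono (by omega)
      constructor
      · rw [cooc_iff A B D hAB hAD hBD u V hV2]
        exact ⟨by omega, by omega, by omega,
          ⟨k+1, hklen, by omega, by omega⟩, ⟨k, hk, by omega, by omega⟩⟩
      · rw [cooc_iff A B D hAB hAD hBD u V hV2]
        rintro ⟨_, _, _, _, ⟨l, hl, hl1, hl2⟩⟩
        rcases le_or_gt l k with hh | hh
        · rcases eq_or_lt_of_le hh with rfl | hh2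
          · omega
          · have hx := offf_succ u V hl
            have := hmono (show l + 1 ≤ k from hh2)
            omega
        · rcases eq_or_lt_of_le (show k + 1 ≤ l from hh) with rfl | hh2
          · omega
          · have := hmono (show k + 1 + 1 ≤ l from hh2)
            have hvl : 2 ≤ V.getD l 0 := vv_ge V hV2 hl
            omega

lemma lmco_eq (A B D : α) (hAB : A ≠ B) (hAD : A ≠ D) (hBD : B ≠ D) (u : ℕ)
    (V : List ℕ) (hV2 : ∀ x ∈ V, 2 ≤ x) (w : ℕ) :
    lmco (offf u V V.length) (fun p => ((V.map (Gadget A B D u)).flatten).getD (p-1) D)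
      ({A, B} : Finset α) w =
    ((Finset.range V.length).filter
        (fun k => V.getD k 0 ≤ w ∧ w ≤ V.getD k 0 + u)).card +
    ((Finset.range V.length).filter
        (fun k => k+1 < V.length ∧ u+2 ≤ w ∧ w ≤ u + V.getD (k+1) 0)).card := by
  classical
  have hmono := offf_mono u V
  set F1 : Finset ℕ := (Finset.range V.length).filter
      (fun k => V.getD k 0 ≤ w ∧ w ≤ V.getD k 0 + u) with hF1
  set F2 : Finset ℕ := (Finset.range V.length).filter
      (fun k => k+1 < V.length ∧ u+2 ≤ w ∧ w ≤ u + V.getD (k+1) 0) with hF2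
  set G1 : Finset (ℕ × ℕ) := F1.image (fun k => (offf u V k + 1, offf u V k + w)) with hG1
  set G2 : Finset (ℕ × ℕ) := F2.image
      (fun k => (offf u V k + V.getD k 0, offf u V k + V.getD k 0 + w - 1)) with hG2
  have hseteq : {p : ℕ × ℕ | LeftMinCooc (offf u V V.length)
      (fun p => ((V.map (Gadget A B D u)).flatten).getD (p-1) D) ({A, B} : Finset α) p.1 p.2 ∧
      p.2 - p.1 + 1 = w} = ↑(G1 ∪ G2) := by
    ext ⟨i, j⟩
    simp only [Set.mem_setOf_eq, Finset.coe_union, Set.mem_union, Finset.mem_coe,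
      hG1, hG2, Finset.mem_image, hF1, hF2, Finset.mem_filter, Finset.mem_range,
      lmc_iff A B D hAB hAD hBD u V hV2, Prod.mk.injEq]
    constructor
    · rintro ⟨⟨k, hk, hcase⟩, hw⟩
      have h5 := offf_succ u V hk
      have hv2 : 2 ≤ V.getD k 0 := vv_ge V hV2 hk
      rcases hcase with ⟨hi, hbj, hjo⟩ | ⟨hklen, hi, hj1, hj2⟩
      · exact Or.inl ⟨k, ⟨hk, by omega, by omega⟩, by omega, by omega⟩
      · have h6 := offf_succ u V hklen
        have hv2' : 2 ≤ V.getD (k+1) 0 := vv_ge V hV2 hklen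
        exact Or.inr ⟨k, ⟨hk, hklen, by omega, by omega⟩, by omega, by omega⟩
    · rintro (⟨k, ⟨hk, hw1, hw2⟩, hi, hj⟩ | ⟨k, ⟨hk, hklen, hw1, hw2⟩, hi, hj⟩)
      · have h5 := offf_succ u V hk
        have hv2 : 2 ≤ V.getD k 0 := vv_ge V hV2 hk
        exact ⟨⟨k, hk, Or.inl ⟨by omega, by omega, by omega⟩⟩, by omega⟩
      · have h5 := offf_succ u V hk
        have h6 := offf_succ u V hklen
        have hv2 : 2 ≤ V.getD k 0 := vv_ge V hV2 hk
        have hv2' : 2 ≤ V.getD (k+1) 0 := vv_ge V hV2 hklen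
        exact ⟨⟨k, hk, Or.inr ⟨hklen, by omega, by omega, by omega⟩⟩, by omega⟩
  rw [lmco, hseteq, Set.ncard_coe_finset]
  have hdisj : Disjoint G1 G2 := by
    rw [Finset.disjoint_left]
    rintro ⟨i, j⟩ h1 h2
    simp only [hG1, hG2, Finset.mem_image, hF1, hF2, Finset.mem_filter, Finset.mem_range,
      Prod.mk.injEq] at h1 h2
    obtain ⟨k, ⟨hk, -⟩, hi1, -⟩ := h1
    obtain ⟨l, ⟨hl, -⟩, hi2, -⟩ := h2
    have hv2 : 2 ≤ V.getD l 0 := vv_ge V hV2 hl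
    rcases le_or_gt k l with hh | hh
    · have := hmono hh; omega
    · have h5 := offf_succ u V hl
      have h6 := hmono (show l + 1 ≤ k from hh)
      omega
  rw [Finset.card_union_of_disjoint hdisj]
  have hinj : ∀ (f : ℕ → ℕ), (∀ k, k < V.length → offf u V k ≤ f k ∧
      f k ≤ offf u V k + V.getD k 0) → True := fun _ _ => trivial
  congr 1
  · apply Finset.card_image_of_injOn
    intro k hk l hl h
    simp only [Finset.coe_filter, Set.mem_setOf_eq, Finset.mem_range, hF1] at hk hl
    simp only [Prod.mk.injEq] at h
    rcases lt_trichotomy k l with hh | hh | hh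
    · have h5 := offf_succ u V (show k < V.length from hk.1)
      have h6 := hmono (show k + 1 ≤ l from hh)
      have hv2 : 2 ≤ V.getD k 0 := vv_ge V hV2 hk.1
      omega
    · exact hh
    · have h5 := offf_succ u V (show l < V.length from hl.1)
      have h6 := hmono (show l + 1 ≤ k from hh)
      have hv2 : 2 ≤ V.getD l 0 := vv_ge V hV2 hl.1
      omega
  · apply Finset.card_image_of_injOn
    intro k hk l hl h
    simp only [Finset.coe_filter, Set.mem_setOf_eq, Finset.mem_range, hF2] at hk hl
    simp only [Prod.mk.injEq] at h
    have hv2k : 2 ≤ V.getD k 0 := vv_ge V hV2 hk.1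
    have hv2l : 2 ≤ V.getD l 0 := vv_ge V hV2 hl.1
    rcases lt_trichotomy k l with hh | hh | hh
    · have h5 := offf_succ u V (show k < V.length from hk.1)
      have h6 := hmono (show k + 1 ≤ l from hh)
      omega
    · exact hh
    · have h5 := offf_succ u V (show l < V.length from hl.1)
      have h6 := hmono (show l + 1 ≤ k from hh)
      omega

lemma offf_top (u : ℕ) (V : List ℕ) : offf u V V.length = (V.map (fun x => x + u)).sum := by
  unfold offf
  rw [List.take_length]


end S17

theorem stmt17 {α : Type*} [DecidableEq α] (A B D : α)
    (hAB : A ≠ B) (hAD : A ≠ D) (hBD : B ≠ D)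
    (u m : ℕ) (hu : 2 ≤ u) (hm : 1 ≤ m) (e c : ℕ → ℕ)
    (he : ∀ j ∈ Finset.Icc 1 m, e j ∈ Finset.Icc 2 u)
    (hmono : ∀ i ∈ Finset.Icc 1 m, ∀ j ∈ Finset.Icc 1 m, i < j → e i < e j)
    (hc : ∀ j ∈ Finset.Icc 1 m, 0 < c j) :
    m ≤ ((Finset.Icc 2 (GadgetString A B D u m e c).length).filter
          (fun i => lmco (GadgetString A B D u m e c).length
              (fun k => (GadgetString A B D u m e c).getD (k-1) D) ({A, B} : Finset α) i ≠
            lmco (GadgetString A B D u m e c).length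
              (fun k => (GadgetString A B D u m e c).getD (k-1) D) ({A, B} : Finset α)
              (i-1))).card ∧
    ((Finset.Icc 2 (GadgetString A B D u m e c).length).filter
          (fun i => lmco (GadgetString A B D u m e c).length
              (fun k => (GadgetString A B D u m e c).getD (k-1) D) ({A, B} : Finset α) i ≠
            lmco (GadgetString A B D u m e c).length
              (fun k => (GadgetString A B D u m e c).getD (k-1) D) ({A, B} : Finset α)
              (i-1))).card ≤ 8 * m ∧
    (GadgetString A B D u m e c).length ≤ 2 * u * ∑ j ∈ Finset.Icc 1 m, c j := by
  classical
  set V : List ℕ := ((List.range m).map (fun j => List.replicate (c (j+1)) (e (j+1)))).flatten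
    with hVdef
  -- membership facts
  have memV : ∀ x ∈ V, ∃ j ∈ Finset.Icc 1 m, x = e j := by
    intro x hx
    rw [hVdef, List.mem_flatten] at hx
    obtain ⟨l, hl, hxl⟩ := hx
    rw [List.mem_map] at hl
    obtain ⟨j, hj, rfl⟩ := hl
    rw [List.mem_range] at hj
    rw [List.eq_of_mem_replicate hxl]
    exact ⟨j+1, by simp [Finset.mem_Icc]; omega, rfl⟩
  have hV2 : ∀ x ∈ V, 2 ≤ x := by
    intro x hx
    obtain ⟨j, hj, rfl⟩ := memV x hx
    exact (Finset.mem_Icc.mp (he j hj)).1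
  have hVu : ∀ x ∈ V, x ≤ u := by
    intro x hx
    obtain ⟨j, hj, rfl⟩ := memV x hx
    exact (Finset.mem_Icc.mp (he j hj)).2
  have eMemV : ∀ j ∈ Finset.Icc 1 m, e j ∈ V := by
    intro j hj
    rw [hVdef, List.mem_flatten]
    refine ⟨List.replicate (c j) (e j), ?_, ?_⟩
    · rw [List.mem_map]
      refine ⟨j - 1, ?_, ?_⟩
      · rw [List.mem_range]
        have := Finset.mem_Icc.mp hj
        omega
      · have hj1 : j - 1 + 1 = j := by
          have := Finset.mem_Icc.mp hj
          omega
        rw [hj1]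
    · exact List.mem_replicate.mpr ⟨by have := hc j hj; omega, rfl⟩
  -- string equality
  have hGS : GadgetString A B D u m e c = (V.map (Gadget A B D u)).flatten := by
    rw [hVdef]
    unfold GadgetString
    rw [List.map_flatten, List.flatten_flatten, List.map_map, List.map_map]
    congr 1
    apply List.map_congr_left
    intro j _
    simp [List.map_replicate]
  -- sum formula
  have hsum : S17.offf u V V.length = ∑ j ∈ Finset.Icc 1 m, c j * (e j + u) := by
    rw [S17.offf_top, hVdef, List.map_flatten, List.sum_flatten, List.map_map, List.map_map]
    simp only [Function.comp_def, List.map_replicate, List.sum_replicate, smul_eq_mul]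
    rw [show ((List.range m).map (fun j => c (j+1) * (e (j+1) + u))).sum
        = ∑ j ∈ Finset.range m, c (j+1) * (e (j+1) + u) from rfl]
    rw [← Finset.Ico_add_one_right_eq_Icc, Finset.sum_Ico_eq_sum_range]
    simp [Nat.add_comm]
  have hlen : (GadgetString A B D u m e c).length = S17.offf u V V.length := by
    rw [hGS]; exact S17.length_flatten A B D u V hV2
  -- lower bound on n
  have hnlb : u + 2 ≤ S17.offf u V V.length := by
    rw [hsum]
    have h1 : (1 : ℕ) ∈ Finset.Icc 1 m := by simp [Finset.mem_Icc]; omega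
    have := Finset.single_le_sum (f := fun j => c j * (e j + u))
      (fun i _ => Nat.zero_le _) h1
    have hc1 := hc 1 h1
    have he1 := Finset.mem_Icc.mp (he 1 h1)
    nlinarith
  rw [hlen, hGS]
  refine ⟨?_, ?_, ?_⟩
  · -- lower bound m ≤ card
    rw [show m = (Finset.Icc 1 m).card from by rw [Nat.card_Icc]; omega]
    apply Finset.card_le_card_of_injOn e
    · intro j hj
      rw [Finset.mem_coe, Finset.mem_filter]
      have hej := Finset.mem_Icc.mp (he j hj)
      constructor
      · rw [Finset.mem_Icc]; omega
      · rw [S17.lmco_eq A B D hAB hAD hBD u V hV2,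
          S17.lmco_eq A B D hAB hAD hBD u V hV2]
        have hz1 : ((Finset.range V.length).filter
            (fun k => k+1 < V.length ∧ u+2 ≤ e j ∧ e j ≤ u + V.getD (k+1) 0)).card = 0 := by
          rw [Finset.card_eq_zero, Finset.filter_eq_empty_iff]
          intro k _; omega
        have hz2 : ((Finset.range V.length).filter
            (fun k => k+1 < V.length ∧ u+2 ≤ e j - 1 ∧ e j - 1 ≤ u + V.getD (k+1) 0)).card
            = 0 := by
          rw [Finset.card_eq_zero, Finset.filter_eq_empty_iff]
          intro k _; omega
        rw [hz1, hz2]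
        have hss : (Finset.range V.length).filter
            (fun k => V.getD k 0 ≤ e j - 1 ∧ e j - 1 ≤ V.getD k 0 + u) ⊂
            (Finset.range V.length).filter
            (fun k => V.getD k 0 ≤ e j ∧ e j ≤ V.getD k 0 + u) := by
          rw [Finset.ssubset_iff_of_subset]
          · obtain ⟨k0, hk0, hval⟩ := List.mem_iff_getElem.mp (eMemV j hj)
            have hval' : V.getD k0 0 = e j := by
              rw [List.getD_eq_getElem _ _ hk0, hval]
            refine ⟨k0, ?_, ?_⟩
            · rw [Finset.mem_filter, Finset.mem_range]
              exact ⟨hk0, by omega⟩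
            · rw [Finset.mem_filter]
              rintro ⟨-, hcon, -⟩
              omega
          · intro k hk
            rw [Finset.mem_filter] at hk ⊢
            exact ⟨hk.1, by omega⟩
        have := Finset.card_lt_card hss
        omega
    · intro a ha b hb hab
      rw [Finset.mem_coe] at ha hb
      by_contra hne
      rcases lt_or_gt_of_ne hne with h | h
      · exact absurd hab (Nat.ne_of_lt (hmono a ha b hb h))
      · exact absurd hab.symm (Nat.ne_of_lt (hmono b hb a ha h))
  · -- upper bound card ≤ 8m
    have hsub : (Finset.Icc 2 (S17.offf u V V.length)).filter
          (fun i => lmco (S17.offf u V V.length)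
              (fun k => ((V.map (Gadget A B D u)).flatten).getD (k-1) D) ({A, B} : Finset α) i ≠
            lmco (S17.offf u V V.length)
              (fun k => ((V.map (Gadget A B D u)).flatten).getD (k-1) D) ({A, B} : Finset α)
              (i-1)) ⊆
        (((Finset.Icc 1 m).image e) ∪ ((Finset.Icc 1 m).image (fun j => e j + u + 1))) ∪
          {u+2} := by
      intro i hi
      rw [Finset.mem_filter, Finset.mem_Icc] at hi
      by_contra hni
      simp only [Finset.mem_union, Finset.mem_image, Finset.mem_singleton, not_or,
        not_exists, not_and] at hni
      obtain ⟨⟨hnA, hnB⟩, hnC⟩ := hni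
      have hA : ∀ x ∈ V, i ≠ x := by
        intro x hx
        obtain ⟨j, hj, rfl⟩ := memV x hx
        exact fun h => hnA j hj h.symm
      have hB : ∀ x ∈ V, i ≠ x + u + 1 := by
        intro x hx
        obtain ⟨j, hj, rfl⟩ := memV x hx
        exact fun h => hnB j hj h.symm
      apply hi.2
      rw [S17.lmco_eq A B D hAB hAD hBD u V hV2,
        S17.lmco_eq A B D hAB hAD hBD u V hV2]
      congr 1
      · apply congrArg
        apply Finset.filter_congr
        intro k hk
        rw [Finset.mem_range] at hk
        have hmem : V.getD k 0 ∈ V := by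
          rw [List.getD_eq_getElem _ _ hk]
          exact List.getElem_mem hk
        have h1 := hA _ hmem
        have h2 := hB _ hmem
        constructor <;> intro <;> omega
      · apply congrArg
        apply Finset.filter_congr
        intro k hk
        by_cases hkl : k + 1 < V.length
        · have hmem : V.getD (k+1) 0 ∈ V := by
            rw [List.getD_eq_getElem _ _ hkl]
            exact List.getElem_mem hkl
          have h1 := hA _ hmem
          have h2 := hB _ hmem
          constructor <;> intro <;> omega
        · constructor <;> (rintro ⟨h, -⟩; exact absurd h hkl)
    calc ((Finset.Icc 2 (S17.offf u V V.length)).filter _).card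
        ≤ ((((Finset.Icc 1 m).image e) ∪ ((Finset.Icc 1 m).image (fun j => e j + u + 1))) ∪
          ({u+2} : Finset ℕ)).card := Finset.card_le_card hsub
      _ ≤ (((Finset.Icc 1 m).image e) ∪ ((Finset.Icc 1 m).image (fun j => e j + u + 1))).card
          + ({u+2} : Finset ℕ).card := Finset.card_union_le _ _
      _ ≤ (((Finset.Icc 1 m).image e).card + ((Finset.Icc 1 m).image
          (fun j => e j + u + 1)).card) + 1 := by
          have := Finset.card_union_le ((Finset.Icc 1 m).image e)
            ((Finset.Icc 1 m).image (fun j => e j + u + 1))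
          simp only [Finset.card_singleton]
          omega
      _ ≤ 8 * m := by
          have h1 := Finset.card_image_le (s := Finset.Icc 1 m) (f := e)
          have h2 := Finset.card_image_le (s := Finset.Icc 1 m) (f := fun j => e j + u + 1)
          have h3 : (Finset.Icc 1 m).card = m := by
            rw [Nat.card_Icc]; omega
          omega
  · -- length bound
    rw [hsum]
    calc ∑ j ∈ Finset.Icc 1 m, c j * (e j + u)
        ≤ ∑ j ∈ Finset.Icc 1 m, c j * (2 * u) := by
          apply Finset.sum_le_sum
          intro j hj
          have := (Finset.mem_Icc.mp (he j hj)).2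
          nlinarith
      _ = 2 * u * ∑ j ∈ Finset.Icc 1 m, c j := by
          rw [Finset.mul_sum]
          apply Finset.sum_congr rfl
          intro j _
          ring
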